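/- Let e_1 = 1 and e_j = Σ_{r=1}^n a_{jr} I_r (j = 2,...,k) in A_n^m, and let ζ = Σ_{j=1}^k x_j e_j with x_j ∈ ℝ. Set ξ_u := f_u(ζ) = x_1 + Σ_{j=2}^k x_j a_{ju}. For any t ∈ ℂ with t ≠ ξ_u for all u = 1,...,m, the element t·e_1 − ζ is invertible and its inverse equals Σ_{u=1}^m (t − ξ_u)^{-1} I_u + Σ_{s=m+1}^n Σ_{r=2}^{s-m+1} Q_{r,s} (t − ξ_{u_s})^{-r} I_s, where Q_{2,s} = T_s := Σ_{j=2}^k x_j a_{js}, B_{q,s} := Σ_{p=m+1}^{s-1} T_p Υ^p_{q,s}, and Q_{r,s} = Σ_{q=r+m-2}^{s-1} Q_{r-1,q} B_{q,s} for r ≥ 3. -/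

import Mathlib

/-- `B_{q,s} = ∑_{p=m+1}^{s-1} T_p Υ^p_{q,s}` (1-based indices). -/
noncomputable def Bcoef (m : ℕ) (T : ℕ → ℂ) (Υ : ℕ → ℕ → ℕ → ℂ) (q s : ℕ) : ℂ :=
  ∑ p ∈ Finset.Icc (m + 1) (s - 1), T p * Υ q p s

/-- `Q_{2,s} = T_s` and, for `r ≥ 3`, `Q_{r,s} = ∑_{q=r+m-2}^{s-1} Q_{r-1,q} B_{q,s}`. -/
noncomputable def Qcoef (m : ℕ) (T : ℕ → ℂ) (Υ : ℕ → ℕ → ℕ → ℂ) : ℕ → ℕ → ℂ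
  | 0, _ => 0
  | 1, _ => 0
  | 2, s => T s
  | (r + 3), s => ∑ q ∈ Finset.Icc (r + 1 + m) (s - 1),
      Qcoef m T Υ (r + 2) q * Bcoef m T Υ q s

theorem resolvent_aux {n m : ℕ} (hm : 1 ≤ m) (hmn : m ≤ n)
    (A : Type*) [CommRing A] [Algebra ℂ A] (I : ℕ → A)
    (h1 : ∀ r s : ℕ, 1 ≤ r → r ≤ m → 1 ≤ s → s ≤ m →
      I r * I s = if r = s then I r else 0)
    (Υ : ℕ → ℕ → ℕ → ℂ)
    (h2 : ∀ q p : ℕ, m < q → q ≤ n → m < p → p ≤ n →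
      I q * I p = ∑ s ∈ Finset.Icc (m + 1) n, Υ q p s • I s)
    (hΥ : ∀ q p s : ℕ, s ≤ max q p → Υ q p s = 0)
    (u : ℕ → ℕ)
    (h3 : ∀ s : ℕ, m < s → s ≤ n → (1 ≤ u s ∧ u s ≤ m ∧ I (u s) * I s = I s ∧
      ∀ r : ℕ, 1 ≤ r → r ≤ m → r ≠ u s → I r * I s = 0))
    (hone : (1 : A) = ∑ r ∈ Finset.Icc 1 m, I r)
    (T τ : ℕ → ℂ) (hτ : ∀ v, 1 ≤ v → v ≤ m → τ v ≠ 0) :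
    IsUnit ((∑ v ∈ Finset.Icc 1 m, τ v • I v) - ∑ p ∈ Finset.Icc (m+1) n, T p • I p) ∧
    ((∑ v ∈ Finset.Icc 1 m, τ v • I v) - ∑ p ∈ Finset.Icc (m+1) n, T p • I p) *
      ((∑ v ∈ Finset.Icc 1 m, (τ v)⁻¹ • I v) +
        ∑ s ∈ Finset.Icc (m+1) n,
          (∑ r ∈ Finset.Icc 2 (s - m + 1), Qcoef m T Υ r s / (τ (u s)) ^ r) • I s) = 1 := by
  classical
  set D : A := ∑ v ∈ Finset.Icc 1 m, τ v • I v with hD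
  set N : A := ∑ p ∈ Finset.Icc (m+1) n, T p • I p with hN
  set E : A := ∑ v ∈ Finset.Icc 1 m, (τ v)⁻¹ • I v with hE
  -- D * E = 1
  have hDE : D * E = 1 := by
    rw [hD, hE, Finset.sum_mul_sum]
    have key : ∀ v ∈ Finset.Icc 1 m,
        (∑ w ∈ Finset.Icc 1 m, (τ v • I v) * ((τ w)⁻¹ • I w)) = I v := by
      intro v hv
      rw [Finset.mem_Icc] at hv
      rw [Finset.sum_eq_single v]
      · rw [smul_mul_smul_comm, h1 v v hv.1 hv.2 hv.1 hv.2, if_pos rfl,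
          mul_inv_cancel₀ (hτ v hv.1 hv.2), one_smul]
      · intro w hw hne
        rw [Finset.mem_Icc] at hw
        rw [smul_mul_smul_comm, h1 v w hv.1 hv.2 hw.1 hw.2, if_neg (Ne.symm hne), smul_zero]
      · intro hv'
        exact absurd (Finset.mem_Icc.mpr hv) hv'
    rw [Finset.sum_congr rfl key, ← hone]
  have hEI : ∀ s, m < s → s ≤ n → E * I s = (τ (u s))⁻¹ • I s := by
    intro s hms hsn
    obtain ⟨hu1, hu2, hus, hor⟩ := h3 s hms hsn
    rw [hE, Finset.sum_mul]
    rw [Finset.sum_eq_single (u s)]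
    · rw [smul_mul_assoc, hus]
    · intro w hw hne
      rw [Finset.mem_Icc] at hw
      rw [smul_mul_assoc, hor w hw.1 hw.2 hne, smul_zero]
    · intro h
      exact absurd (Finset.mem_Icc.mpr ⟨hu1, hu2⟩) h
  have hEjI : ∀ (j : ℕ) (s : ℕ), m < s → s ≤ n →
      E ^ j * I s = ((τ (u s))⁻¹) ^ j • I s := by
    intro j
    induction j with
    | zero => intro s _ _; simp
    | succ j ih =>
      intro s hms hsn
      rw [pow_succ, mul_assoc, hEI s hms hsn, mul_smul_comm, ih s hms hsn, smul_smul,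
        mul_comm, ← pow_succ]
  have hB0 : ∀ q s : ℕ, s ≤ q → Bcoef m T Υ q s = 0 := by
    intro q s h
    refine Finset.sum_eq_zero fun p _ => ?_
    rw [hΥ q p s (le_trans h (le_max_left q p)), mul_zero]
  have hQ0 : ∀ d s : ℕ, s ≤ m + d + 1 → Qcoef m T Υ (d + 3) s = 0 := by
    intro d s h
    show (∑ q ∈ Finset.Icc (d + 1 + m) (s - 1), Qcoef m T Υ (d + 2) q * Bcoef m T Υ q s) = 0
    rw [Finset.Icc_eq_empty (by omega), Finset.sum_empty]
  have hNj : ∀ j : ℕ, N ^ (j + 1)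
      = ∑ s ∈ Finset.Icc (m+1) n, Qcoef m T Υ (j + 2) s • I s := by
    intro j
    induction j with
    | zero =>
      rw [zero_add, pow_one, hN]
      exact Finset.sum_congr rfl fun s _ => rfl
    | succ j ih =>
      rw [pow_succ, ih, hN, Finset.sum_mul_sum]
      have inner : ∀ q ∈ Finset.Icc (m+1) n,
          (∑ p ∈ Finset.Icc (m+1) n, (Qcoef m T Υ (j+2) q • I q) * (T p • I p))
            = ∑ s ∈ Finset.Icc (m+1) n,
                (Qcoef m T Υ (j+2) q * Bcoef m T Υ q s) • I s := by
        intro q hq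
        rw [Finset.mem_Icc] at hq
        have hterm : ∀ p ∈ Finset.Icc (m+1) n,
            (Qcoef m T Υ (j+2) q • I q) * (T p • I p)
              = ∑ s ∈ Finset.Icc (m+1) n,
                  (Qcoef m T Υ (j+2) q * (T p * Υ q p s)) • I s := by
          intro p hp
          rw [Finset.mem_Icc] at hp
          rw [smul_mul_smul_comm, h2 q p (by omega) hq.2 (by omega) hp.2, Finset.smul_sum]
          exact Finset.sum_congr rfl fun s _ => by rw [smul_smul, mul_assoc]
        rw [Finset.sum_congr rfl hterm, Finset.sum_comm]
        refine Finset.sum_congr rfl fun s hs => ?_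
        rw [Finset.mem_Icc] at hs
        rw [← Finset.sum_smul, ← Finset.mul_sum]
        have hBs : ∑ p ∈ Finset.Icc (m+1) n, T p * Υ q p s = Bcoef m T Υ q s := by
          refine (Finset.sum_subset (Finset.Icc_subset_Icc le_rfl (by omega)) ?_).symm
          intro p hp hnp
          rw [Finset.mem_Icc] at hp
          rw [Finset.mem_Icc] at hnp
          have hsp : s ≤ p := by omega
          rw [hΥ q p s (le_trans hsp (le_max_right q p)), mul_zero]
        rw [hBs]
      rw [Finset.sum_congr rfl inner, Finset.sum_comm]
      refine Finset.sum_congr rfl fun s hs => ?_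
      rw [Finset.mem_Icc] at hs
      rw [← Finset.sum_smul]
      congr 1
      show _ = ∑ q ∈ Finset.Icc (j + 1 + m) (s - 1), Qcoef m T Υ (j + 2) q * Bcoef m T Υ q s
      refine (Finset.sum_subset ?_ ?_).symm
      · intro q hq
        rw [Finset.mem_Icc] at hq ⊢
        omega
      · intro q hq hnq
        rw [Finset.mem_Icc] at hq
        rw [Finset.mem_Icc] at hnq
        by_cases hqs : s ≤ q
        · rw [hB0 q s hqs, mul_zero]
        · obtain ⟨d, rfl⟩ : ∃ d, j = d + 1 := ⟨j - 1, by omega⟩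
          rw [show d + 1 + 2 = d + 3 from rfl, hQ0 d q (by omega), zero_mul]
  have hNtop : N ^ (n - m + 1) = 0 := by
    rw [hNj (n - m)]
    refine Finset.sum_eq_zero fun s hs => ?_
    rw [Finset.mem_Icc] at hs
    obtain ⟨d, hd⟩ : ∃ d, n - m = d + 1 := ⟨n - m - 1, by omega⟩
    rw [show n - m + 2 = d + 3 by omega, hQ0 d s (by omega), zero_smul]
  -- the candidate inverse is the finite Neumann series
  have hW : E + (∑ s ∈ Finset.Icc (m+1) n,
        (∑ r ∈ Finset.Icc 2 (s - m + 1), Qcoef m T Υ r s / (τ (u s)) ^ r) • I s)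
      = ∑ j ∈ Finset.range (n - m + 1), E ^ (j + 1) * N ^ j := by
    rw [Finset.sum_range_succ']
    simp only [zero_add, pow_one, pow_zero, mul_one]
    rw [add_comm (∑ j ∈ Finset.range (n - m), E ^ (j + 1 + 1) * N ^ (j + 1)) E]
    congr 1
    have hterm : ∀ j ∈ Finset.range (n - m), E ^ (j + 1 + 1) * N ^ (j + 1)
        = ∑ s ∈ Finset.Icc (m+1) n,
            (Qcoef m T Υ (j + 2) s * ((τ (u s))⁻¹) ^ (j + 2)) • I s := by
      intro j _
      rw [hNj j, Finset.mul_sum]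
      refine Finset.sum_congr rfl fun s hs => ?_
      rw [Finset.mem_Icc] at hs
      rw [mul_smul_comm, show j + 1 + 1 = j + 2 from rfl, hEjI (j + 2) s (by omega) hs.2,
        smul_smul]
    rw [Finset.sum_congr rfl hterm, Finset.sum_comm]
    refine Finset.sum_congr rfl fun s hs => ?_
    rw [Finset.mem_Icc] at hs
    rw [← Finset.sum_smul]
    congr 1
    have hL : ∑ r ∈ Finset.Icc 2 (s - m + 1), Qcoef m T Υ r s / (τ (u s)) ^ r
        = ∑ i ∈ Finset.range (s - m), Qcoef m T Υ (i + 2) s * ((τ (u s))⁻¹) ^ (i + 2) := by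
      rw [← Finset.Ico_add_one_right_eq_Icc, Finset.sum_Ico_eq_sum_range,
        show s - m + 1 + 1 - 2 = s - m by omega]
      refine Finset.sum_congr rfl fun i _ => ?_
      rw [Nat.add_comm 2 i, div_eq_mul_inv, inv_pow]
    rw [hL]
    refine Finset.sum_subset ?_ ?_
    · intro i hi
      rw [Finset.mem_range] at hi ⊢
      omega
    · intro i hi hni
      rw [Finset.mem_range] at hi
      rw [Finset.mem_range] at hni
      obtain ⟨d, rfl⟩ : ∃ d, i = d + 1 := ⟨i - 1, by omega⟩
      rw [show d + 1 + 2 = d + 3 from rfl, hQ0 d s (by omega), zero_mul]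
  have hmul : (D - N) * (E + (∑ s ∈ Finset.Icc (m+1) n,
      (∑ r ∈ Finset.Icc 2 (s - m + 1), Qcoef m T Υ r s / (τ (u s)) ^ r) • I s)) = 1 := by
    rw [hW, Finset.mul_sum]
    have key : ∀ j ∈ Finset.range (n - m + 1),
        (D - N) * (E ^ (j + 1) * N ^ j) = E ^ j * N ^ j - E ^ (j + 1) * N ^ (j + 1) := by
      intro j _
      rw [sub_mul]
      congr 1
      · calc D * (E ^ (j + 1) * N ^ j) = (D * E) * (E ^ j * N ^ j) := by rw [pow_succ]; ring
          _ = E ^ j * N ^ j := by rw [hDE, one_mul]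
      · rw [pow_succ N]; ring
    rw [Finset.sum_congr rfl key, Finset.sum_range_sub' (fun j => E ^ j * N ^ j) (n - m + 1)]
    simp [hNtop]
  exact ⟨IsUnit.of_mul_eq_one _ hmul, hmul⟩

/-- Lemma 1: expansion of the resolvent `(t e_1 - ζ)⁻¹` in `A_n^m`,
where `ζ = ∑_{j=1}^k x_j e_j`, `e_1 = 1`, `e_j = ∑_r a_{jr} I_r`,
`ξ_u = x_1 + ∑_{j=2}^k x_j a_{ju}` and `T_s = ∑_{j=2}^k x_j a_{js}`. -/
theorem resolvent_expansion {n m k : ℕ} (hm : 1 ≤ m) (hmn : m ≤ n) (hk : 2 ≤ k)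
    (A : Type*) [CommRing A] [Algebra ℂ A] (I : ℕ → A)
    (h1 : ∀ r s : ℕ, 1 ≤ r → r ≤ m → 1 ≤ s → s ≤ m →
      I r * I s = if r = s then I r else 0)
    (Υ : ℕ → ℕ → ℕ → ℂ)
    (h2 : ∀ q p : ℕ, m < q → q ≤ n → m < p → p ≤ n →
      I q * I p = ∑ s ∈ Finset.Icc (m + 1) n, Υ q p s • I s)
    (hΥ : ∀ q p s : ℕ, s ≤ max q p → Υ q p s = 0)
    (u : ℕ → ℕ)
    (h3 : ∀ s : ℕ, m < s → s ≤ n → (1 ≤ u s ∧ u s ≤ m ∧ I (u s) * I s = I s ∧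
      ∀ r : ℕ, 1 ≤ r → r ≤ m → r ≠ u s → I r * I s = 0))
    (hone : (1 : A) = ∑ r ∈ Finset.Icc 1 m, I r)
    (a : ℕ → ℕ → ℂ) (x : ℕ → ℝ) :
    ∀ t : ℂ, (∀ v : ℕ, 1 ≤ v → v ≤ m →
        t ≠ (x 1 : ℂ) + ∑ j ∈ Finset.Icc 2 k, (x j : ℂ) * a j v) →
      IsUnit (t • (1 : A) -
        ((x 1 : ℂ) • (1 : A) +
          ∑ j ∈ Finset.Icc 2 k, (x j : ℂ) • ∑ r ∈ Finset.Icc 1 n, a j r • I r)) ∧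
      (t • (1 : A) -
        ((x 1 : ℂ) • (1 : A) +
          ∑ j ∈ Finset.Icc 2 k, (x j : ℂ) • ∑ r ∈ Finset.Icc 1 n, a j r • I r)) *
        (∑ v ∈ Finset.Icc 1 m,
            (t - ((x 1 : ℂ) + ∑ j ∈ Finset.Icc 2 k, (x j : ℂ) * a j v))⁻¹ • I v +
          ∑ s ∈ Finset.Icc (m + 1) n,
            (∑ r ∈ Finset.Icc 2 (s - m + 1),
              Qcoef m (fun p => ∑ j ∈ Finset.Icc 2 k, (x j : ℂ) * a j p) Υ r s /
                (t - ((x 1 : ℂ) + ∑ j ∈ Finset.Icc 2 k, (x j : ℂ) * a j (u s))) ^ r) • I s)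
        = 1 := by
  intro t ht
  have hτ' : ∀ v, 1 ≤ v → v ≤ m →
      t - ((x 1 : ℂ) + ∑ j ∈ Finset.Icc 2 k, (x j : ℂ) * a j v) ≠ 0 :=
    fun v h1v h2v => sub_ne_zero.mpr (ht v h1v h2v)
  have key := resolvent_aux hm hmn A I h1 Υ h2 hΥ u h3 hone
    (fun p => ∑ j ∈ Finset.Icc 2 k, (x j : ℂ) * a j p)
    (fun v => t - ((x 1 : ℂ) + ∑ j ∈ Finset.Icc 2 k, (x j : ℂ) * a j v)) hτ'
  have hsplit : ∀ f : ℕ → A, ∑ r ∈ Finset.Icc 1 n, f r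
      = ∑ r ∈ Finset.Icc 1 m, f r + ∑ r ∈ Finset.Icc (m+1) n, f r := by
    intro f
    have hu : Finset.Icc 1 n = Finset.Icc 1 m ∪ Finset.Icc (m+1) n := by
      ext r
      simp only [Finset.mem_Icc, Finset.mem_union]
      omega
    rw [hu, Finset.sum_union]
    rw [Finset.disjoint_left]
    intro r hr hr'
    rw [Finset.mem_Icc] at hr hr'
    omega
  have hζ : t • (1 : A) - ((x 1 : ℂ) • (1 : A) +
        ∑ j ∈ Finset.Icc 2 k, (x j : ℂ) • ∑ r ∈ Finset.Icc 1 n, a j r • I r)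
      = (∑ v ∈ Finset.Icc 1 m,
          (t - ((x 1 : ℂ) + ∑ j ∈ Finset.Icc 2 k, (x j : ℂ) * a j v)) • I v)
        - ∑ p ∈ Finset.Icc (m+1) n, (∑ j ∈ Finset.Icc 2 k, (x j : ℂ) * a j p) • I p := by
    have h4 : ∀ S : Finset ℕ, ∑ j ∈ Finset.Icc 2 k, (x j : ℂ) • ∑ r ∈ S, a j r • I r
        = ∑ r ∈ S, (∑ j ∈ Finset.Icc 2 k, (x j : ℂ) * a j r) • I r := by
      intro S
      simp_rw [Finset.smul_sum, smul_smul]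
      rw [Finset.sum_comm]
      simp_rw [← Finset.sum_smul]
    rw [h4, hsplit (fun r => (∑ j ∈ Finset.Icc 2 k, (x j : ℂ) * a j r) • I r), hone]
    simp_rw [Finset.smul_sum, sub_smul, add_smul, Finset.sum_sub_distrib,
      Finset.sum_add_distrib]
    abel
  rw [hζ]
  exact key
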